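/- Let S_{n,k} be the star of order n with k disjoint edges added within its independent set, where k ≥ 1 and 2k ≤ n−1. If n − 1 + k ≥ 9, then the spectral radius of S_{n,k} satisfies μ(S_{n,k}) ≤ √(n−1+k). -/
import Mathlib

open Matrix Finset

def IsSpecRad {n : ℕ} (A : Matrix (Fin n) (Fin n) ℝ) (μ : ℝ) : Prop :=
  Module.End.HasEigenvalue A.mulVecLin μ ∧
    ∀ ν : ℝ, Module.End.HasEigenvalue A.mulVecLin ν → ν ≤ μ

/-- The star of order `n` (dominating vertex `0`) with `k` disjoint extra edges
`{1,2}, {3,4}, …, {2k-1, 2k}` inside its independent set. -/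
def SnK (n k : ℕ) : SimpleGraph (Fin n) :=
  SimpleGraph.fromRel (fun a b =>
    a.val = 0 ∨ ∃ i, i < k ∧ a.val = 2 * i + 1 ∧ b.val = 2 * i + 2)

noncomputable instance (n k : ℕ) : DecidableRel (SnK n k).Adj :=
  Classical.decRel _

lemma snk_adj {n k : ℕ} (a b : Fin n) :
    (SnK n k).Adj a b ↔ a ≠ b ∧ (a.val = 0 ∨ b.val = 0 ∨
      (∃ i, i < k ∧ a.val = 2*i+1 ∧ b.val = 2*i+2) ∨
      (∃ i, i < k ∧ b.val = 2*i+1 ∧ a.val = 2*i+2)) := by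
  show (SimpleGraph.fromRel _).Adj a b ↔ _
  rw [SimpleGraph.fromRel_adj]
  refine and_congr_right fun _ => ?_
  constructor
  · rintro ((h|h)|(h|h))
    · exact Or.inl h
    · exact Or.inr (Or.inr (Or.inl h))
    · exact Or.inr (Or.inl h)
    · exact Or.inr (Or.inr (Or.inr h))
  · rintro (h|h|h|h)
    · exact Or.inl (Or.inl h)
    · exact Or.inr (Or.inl h)
    · exact Or.inl (Or.inr h)
    · exact Or.inr (Or.inr h)

lemma adj_zero {n k : ℕ} (hn : 0 < n) (b : Fin n) :
    (SnK n k).Adj ⟨0, hn⟩ b ↔ ¬ (b = ⟨0, hn⟩) := by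
  rw [snk_adj]
  constructor
  · rintro ⟨hne, -⟩ h; exact hne h.symm
  · intro h
    refine ⟨fun hh => h hh.symm, Or.inl rfl⟩

lemma adj_odd {n k : ℕ} (hk : 2*k+1 ≤ n) {i : ℕ} (hi : i < k) (b : Fin n) :
    (SnK n k).Adj ⟨2*i+1, by omega⟩ b ↔
      b = ⟨0, by omega⟩ ∨ b = ⟨2*i+2, by omega⟩ := by
  rw [snk_adj]
  constructor
  · rintro ⟨hne, h|h|⟨i',hi',h1,h2⟩|⟨i',hi',h1,h2⟩⟩
    · simp only [Fin.val_mk] at h; omega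
    · left; exact Fin.ext h
    · simp only [Fin.val_mk] at h1
      right; apply Fin.ext; simp only [Fin.val_mk]; omega
    · simp only [Fin.val_mk] at h2; omega
  · rintro (rfl|rfl)
    · exact ⟨by simp [Fin.ext_iff], Or.inr (Or.inl rfl)⟩
    · exact ⟨by simp [Fin.ext_iff], Or.inr (Or.inr (Or.inl ⟨i, hi, rfl, rfl⟩))⟩

lemma adj_even {n k : ℕ} (hk : 2*k+1 ≤ n) {i : ℕ} (hi : i < k) (b : Fin n) :
    (SnK n k).Adj ⟨2*i+2, by omega⟩ b ↔
      b = ⟨0, by omega⟩ ∨ b = ⟨2*i+1, by omega⟩ := by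
  rw [snk_adj]
  constructor
  · rintro ⟨hne, h|h|⟨i',hi',h1,h2⟩|⟨i',hi',h1,h2⟩⟩
    · simp only [Fin.val_mk] at h; omega
    · left; exact Fin.ext h
    · simp only [Fin.val_mk] at h1; omega
    · simp only [Fin.val_mk] at h2
      right; apply Fin.ext; simp only [Fin.val_mk]; omega
  · rintro (rfl|rfl)
    · exact ⟨by simp [Fin.ext_iff], Or.inr (Or.inl rfl)⟩
    · exact ⟨by simp only [ne_eq, Fin.mk.injEq]; omega,
        Or.inr (Or.inr (Or.inr ⟨i, hi, rfl, rfl⟩))⟩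

lemma adj_far {n k : ℕ} {m : ℕ} (hm : m < n) (hm2 : 2*k+1 ≤ m) (b : Fin n) :
    (SnK n k).Adj ⟨m, hm⟩ b ↔ b = ⟨0, by omega⟩ := by
  rw [snk_adj]
  constructor
  · rintro ⟨hne, h|h|⟨i',hi',h1,h2⟩|⟨i',hi',h1,h2⟩⟩
    · simp only [Fin.val_mk] at h; omega
    · exact Fin.ext h
    · simp only [Fin.val_mk] at h1; omega
    · simp only [Fin.val_mk] at h2; omega
  · rintro rfl
    exact ⟨by simp only [ne_eq, Fin.mk.injEq]; omega, Or.inr (Or.inl rfl)⟩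

lemma sum_ite_pair {n : ℕ} (v : Fin n → ℝ) (c d : Fin n) (hcd : c ≠ d)
    (P : Fin n → Prop) [DecidablePred P] (hP : ∀ x, P x ↔ x = c ∨ x = d) :
    ∑ x, (if P x then v x else 0) = v c + v d := by
  have : ∀ x : Fin n, (if P x then v x else 0)
      = (if x = c then v x else 0) + (if x = d then v x else 0) := by
    intro x
    by_cases h1 : x = c <;> by_cases h2 : x = d <;>
      simp [h1, h2, hP, hcd] <;> simp_all
  rw [Finset.sum_congr rfl (fun x _ => this x), Finset.sum_add_distrib]
  simp [Finset.sum_ite_eq' Finset.univ]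

lemma sum_ite_single {n : ℕ} (v : Fin n → ℝ) (c : Fin n)
    (P : Fin n → Prop) [DecidablePred P] (hP : ∀ x, P x ↔ x = c) :
    ∑ x, (if P x then v x else 0) = v c := by
  have : ∀ x : Fin n, (if P x then v x else 0) = (if x = c then v x else 0) := by
    intro x; by_cases h1 : x = c <;> simp [h1, hP]
  rw [Finset.sum_congr rfl (fun x _ => this x)]
  simp [Finset.sum_ite_eq' Finset.univ]

lemma sum_ite_ne {n : ℕ} (v : Fin n → ℝ) (c : Fin n)
    (P : Fin n → Prop) [DecidablePred P] (hP : ∀ x, P x ↔ ¬ (x = c)) :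
    ∑ x, (if P x then v x else 0) = (∑ x, v x) - v c := by
  have : ∀ x : Fin n, (if P x then v x else 0) = v x - (if x = c then v x else 0) := by
    intro x; by_cases h1 : x = c <;> simp [h1, hP]
  rw [Finset.sum_congr rfl (fun x _ => this x), Finset.sum_sub_distrib]
  simp [Finset.sum_ite_eq' Finset.univ]

lemma pairSum (g : ℕ → ℝ) (k : ℕ) :
    ∑ m ∈ Finset.Ico 1 (2*k+1), g m
      = ∑ i ∈ Finset.range k, (g (2*i+1) + g (2*i+2)) := by
  induction k with
  | zero => simp
  | succ k ih =>
    rw [Finset.sum_range_succ, ← ih,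
      show 2*(k+1)+1 = ((2*k+1)+1)+1 by ring,
      Finset.sum_Ico_succ_top (by omega), Finset.sum_Ico_succ_top (by omega)]
    ring_nf

lemma row_eval {n : ℕ} (G : SimpleGraph (Fin n)) [DecidableRel G.Adj]
    (v : Fin n → ℝ) (j : Fin n) :
    (G.adjMatrix ℝ).mulVec v j = ∑ i, (if G.Adj j i then v i else 0) := by
  simp [Matrix.mulVec, dotProduct, SimpleGraph.adjMatrix_apply, ite_mul]

theorem SnK_upper (n k : ℕ) (hk1 : 1 ≤ k) (hk : 2 * k + 1 ≤ n) (h9 : 9 ≤ n - 1 + k) (μ : ℝ)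
    (hμ : IsSpecRad ((SnK n k).adjMatrix ℝ) μ) :
    μ ≤ Real.sqrt ((n : ℝ) - 1 + k) := by
  have hn0 : 0 < n := by omega
  set t := Real.sqrt ((n : ℝ) - 1 + k) with htdef
  have hm9 : (9:ℝ) ≤ (n:ℝ) - 1 + k := by
    have h1 : (9:ℝ) ≤ ((n - 1 + k : ℕ) : ℝ) := by exact_mod_cast h9
    rw [Nat.cast_add, Nat.cast_sub (by omega)] at h1
    push_cast at h1 ⊢; linarith
  have ht3 : (3:ℝ) ≤ t := by
    rw [htdef, show (3:ℝ) = Real.sqrt 9 by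
      rw [show (9:ℝ) = 3^2 by norm_num, Real.sqrt_sq (by norm_num)]]
    exact Real.sqrt_le_sqrt hm9
  have ht2 : t^2 = (n:ℝ) - 1 + k := Real.sq_sqrt (by linarith)
  obtain ⟨hev, -⟩ := hμ
  obtain ⟨v, hv⟩ := hev.exists_hasEigenvector
  have hveq : ((SnK n k).adjMatrix ℝ).mulVec v = μ • v := by
    simpa [Matrix.mulVecLin_apply] using hv.apply_eq_smul
  have hrow : ∀ j : Fin n, ∑ i, (if (SnK n k).Adj j i then v i else 0) = μ * v j := by
    intro j
    rw [← row_eval, hveq]; simp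
  set z : Fin n := ⟨0, hn0⟩ with hz
  set a : ℝ := v z with ha
  set F : ℕ → ℝ := fun m => if h : m < n then v ⟨m, h⟩ else 0 with hFdef
  have hFv : ∀ (m : ℕ) (h : m < n), F m = v ⟨m, h⟩ := by
    intro m h; rw [hFdef]; exact dif_pos h
  -- row equations
  have h0 : (∑ i, v i) - a = μ * a := by
    have h := hrow z
    rwa [sum_ite_ne v z _ (adj_zero hn0)] at h
  have hxe : ∀ i ∈ Finset.range k, a + F (2*i+2) = μ * F (2*i+1) := by
    intro i hi
    have hik := Finset.mem_range.mp hi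
    have h := hrow ⟨2*i+1, by omega⟩
    rw [sum_ite_pair v ⟨0, by omega⟩ ⟨2*i+2, by omega⟩
      (by simp only [ne_eq, Fin.mk.injEq]; omega) _ (adj_odd hk hik)] at h
    rw [hFv (2*i+2) (by omega), hFv (2*i+1) (by omega)]
    exact h
  have hye : ∀ i ∈ Finset.range k, a + F (2*i+1) = μ * F (2*i+2) := by
    intro i hi
    have hik := Finset.mem_range.mp hi
    have h := hrow ⟨2*i+2, by omega⟩
    rw [sum_ite_pair v ⟨0, by omega⟩ ⟨2*i+1, by omega⟩
      (by simp only [ne_eq, Fin.mk.injEq]; omega) _ (adj_even hk hik)] at h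
    rw [hFv (2*i+1) (by omega), hFv (2*i+2) (by omega)]
    exact h
  have hu : ∀ m ∈ Finset.Ico (2*k+1) n, a = μ * F m := by
    intro m hm
    obtain ⟨hm1, hm2⟩ := Finset.mem_Ico.mp hm
    have h := hrow ⟨m, hm2⟩
    rw [sum_ite_single v ⟨0, by omega⟩ _ (adj_far hm2 hm1)] at h
    rw [hFv m hm2]
    exact h
  set T : ℝ := ∑ i ∈ Finset.range k, (F (2*i+1) + F (2*i+2)) with hT
  set U : ℝ := ∑ m ∈ Finset.Ico (2*k+1) n, F m with hU
  have htotal : ∑ i, v i = a + T + U := by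
    have h1 : ∑ i, v i = ∑ m ∈ Finset.range n, F m := by
      rw [← Fin.sum_univ_eq_sum_range F n]
      exact Finset.sum_congr rfl fun i _ => by rw [hFv i.val i.isLt, Fin.eta]
    rw [h1, Finset.range_eq_Ico,
      ← Finset.sum_Ico_consecutive F (show (0:ℕ) ≤ 2*k+1 by omega) hk,
      ← Finset.sum_Ico_consecutive F (show (0:ℕ) ≤ 1 by omega) (show 1 ≤ 2*k+1 by omega),
      pairSum F k]
    have h2 : ∑ m ∈ Finset.Ico 0 1, F m = a := by
      rw [show Finset.Ico 0 1 = {0} by rfl, Finset.sum_singleton, hFv 0 hn0]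
    rw [h2]
  have eq1 : T + U = μ * a := by
    rw [htotal] at h0; linarith
  have eq2 : 2*(k:ℝ)*a + T = μ * T := by
    have hsum : ∑ i ∈ Finset.range k, (2*a + (F (2*i+1) + F (2*i+2))) = μ * T := by
      rw [hT, Finset.mul_sum]
      refine Finset.sum_congr rfl fun i hi => ?_
      have h1 := hxe i hi
      have h2 := hye i hi
      linear_combination h1 + h2
    rw [Finset.sum_add_distrib, Finset.sum_const, Finset.card_range, nsmul_eq_mul] at hsum
    rw [← hT] at hsum
    linarith
  have eq3 : ((n:ℝ) - (2*(k:ℝ)+1)) * a = μ * U := by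
    have hsum : ∑ m ∈ Finset.Ico (2*k+1) n, a = ∑ m ∈ Finset.Ico (2*k+1) n, (μ * F m) :=
      Finset.sum_congr rfl hu
    rw [Finset.sum_const, ← Finset.mul_sum, Nat.card_Ico, nsmul_eq_mul, ← hU] at hsum
    have hc : ((n - (2*k+1) : ℕ) : ℝ) = (n:ℝ) - (2*(k:ℝ)+1) := by
      rw [Nat.cast_sub hk]; push_cast; ring
    rw [hc] at hsum
    exact hsum
  by_cases ha0 : a = 0
  · -- eigenvector vanishes at the center: μ ∈ {0, ±1}
    obtain ⟨j, hj⟩ : ∃ j, v j ≠ 0 := by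
      by_contra h; push_neg at h; exact hv.2 (funext h)
    have hμ1 : μ ≤ 1 := by
      have hvj : v j = F j.val := by rw [hFv j.val j.isLt, Fin.eta]
      by_cases hj0 : j.val = 0
      · exfalso
        apply hj
        have : j = z := Fin.ext (by simp [hz, hj0])
        rw [this, ← ha, ha0]
      · by_cases hjm : j.val ≤ 2*k
        · -- matched vertex: μ² = 1
          have hsq : μ^2 = 1 := by
            rcases Nat.even_or_odd j.val with he | ho
            · obtain ⟨c, hc⟩ := he
              have hik : c - 1 < k := by omega
              have hjv : j.val = 2*(c-1)+2 := by omega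
              have h1 := hxe (c-1) (Finset.mem_range.mpr hik)
              have h2 := hye (c-1) (Finset.mem_range.mpr hik)
              rw [ha0] at h1 h2
              have hF0 : F (2*(c-1)+2) ≠ 0 := by rw [← hjv, ← hvj]; exact hj
              have : (μ^2 - 1) * F (2*(c-1)+2) = 0 := by linear_combination (-1) * h1 - μ * h2
              rcases mul_eq_zero.mp this with h | h
              · linarith
              · exact absurd h hF0
            · obtain ⟨c, hc⟩ := ho
              have hik : c < k := by omega
              have h1 := hxe c (Finset.mem_range.mpr hik)
              have h2 := hye c (Finset.mem_range.mpr hik)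
              rw [ha0] at h1 h2
              have hF0 : F (2*c+1) ≠ 0 := by
                rw [show 2*c+1 = j.val by omega, ← hvj]; exact hj
              have : (μ^2 - 1) * F (2*c+1) = 0 := by linear_combination (-1) * h2 - μ * h1
              rcases mul_eq_zero.mp this with h | h
              · linarith
              · exact absurd h hF0
          nlinarith [hsq]
        · -- far vertex: μ = 0
          have h := hu j.val (Finset.mem_Ico.mpr ⟨by omega, j.isLt⟩)
          rw [ha0, ← hvj] at h
          rcases mul_eq_zero.mp h.symm with h' | h'
          · linarith
          · exact absurd h' hj
    linarith
  · -- center coordinate nonzero: μ is a root of the cubic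
    have key : a * (μ^3 - μ^2 - ((n:ℝ)-1)*μ + ((n:ℝ)-1-2*(k:ℝ))) = 0 := by
      linear_combination (-(μ*(μ-1))) * eq1 + (-μ) * eq2 + (-(μ-1)) * eq3
    have hp : μ^3 - μ^2 - ((n:ℝ)-1)*μ + ((n:ℝ)-1-2*(k:ℝ)) = 0 := by
      rcases mul_eq_zero.mp key with h | h
      · exact absurd h ha0
      · exact h
    by_contra hcon
    push_neg at hcon
    have hk1' : (1:ℝ) ≤ (k:ℝ) := by exact_mod_cast hk1
    have hp' : μ^3 - μ^2 - (t^2 - (k:ℝ))*μ + (t^2 - (k:ℝ) - 2*(k:ℝ)) = 0 := by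
      have hn1 : (n:ℝ) - 1 = t^2 - (k:ℝ) := by linarith
      rw [hn1] at hp
      linarith [hp]
    have hfac : 0 < μ^2 + μ*t - μ - t + (k:ℝ) := by nlinarith
    have hprod : 0 < (μ - t) * (μ^2 + μ*t - μ - t + (k:ℝ)) :=
      mul_pos (by linarith) hfac
    nlinarith [hprod, mul_nonneg (by linarith : (0:ℝ) ≤ (k:ℝ))
      (by linarith : (0:ℝ) ≤ t - 3), hp']
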